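/- Let S be a numerical semigroup with exactly one small atom, i.e., exactly one atom strictly less than F(S). Then every element of S ∩ [0, F(S)] is a multiple of m(S), and the complement S̃ equals m(S)·ℕ ∪ {n : n ≥ B(S)}, which is a numerical semigroup. -/
import Mathlib


open Set

def IsNumericalSet (S : Set ℕ) : Prop := 0 ∈ S ∧ Sᶜ.Finite

def IsNumericalSemigroup (S : Set ℕ) : Prop :=
  IsNumericalSet S ∧ ∀ a ∈ S, ∀ b ∈ S, a + b ∈ S

/-- The associated set `A(S) = {s ∈ S : s + S ⊆ S}`. -/
def A (S : Set ℕ) : Set ℕ := {s ∈ S | ∀ t ∈ S, s + t ∈ S}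

/-- The Frobenius number: the largest gap of `S`. -/
noncomputable def F (S : Set ℕ) : ℕ := sSup Sᶜ

/-- The base: the largest element of `S` below `F S`. -/
noncomputable def B (S : Set ℕ) : ℕ := sSup {s | s ∈ S ∧ s < F S}

/-- The multiplicity: the smallest positive element of `S`. -/
noncomputable def m (S : Set ℕ) : ℕ := sInf {s | s ∈ S ∧ 0 < s}

/-- The complement numerical set (for `S ≠ ℕ`). -/
noncomputable def Stilde (S : Set ℕ) : Set ℕ :=
  {x | ∃ s ∈ S, s ≤ B S ∧ x = B S - s} ∪ {n | B S ≤ n}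

-- The complement operation, with the convention that the complement of ℕ is ℕ.
open Classical in
noncomputable def complOp (S : Set ℕ) : Set ℕ :=
  if S = Set.univ then Set.univ else Stilde S

/-- The genus: the number of gaps. -/
noncomputable def genus (S : Set ℕ) : ℕ := Sᶜ.ncard

/-- The number of boxes with hook length 1. -/
noncomputable def c1 (S : Set ℕ) : ℕ := {n | n ∈ S ∧ n + 1 ∉ S}.ncard

/-- An atom: a positive element not a sum of two positive elements. -/
def IsAtomOf (S : Set ℕ) (a : ℕ) : Prop :=
  a ∈ S ∧ 0 < a ∧ ¬ ∃ x ∈ S, ∃ y ∈ S, 0 < x ∧ 0 < y ∧ a = x + y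

/-- A small atom: an atom smaller than the Frobenius number. -/
def IsSmallAtom (S : Set ℕ) (a : ℕ) : Prop := IsAtomOf S a ∧ a < F S

/-- The embedding dimension: the number of atoms. -/
noncomputable def numAtoms (S : Set ℕ) : ℕ := {a | IsAtomOf S a}.ncard

/-- Maximal embedding dimension. -/
def MaxED (S : Set ℕ) : Prop := numAtoms S = m S


theorem one_small_atom_complement (S : Set ℕ) (hS : IsNumericalSemigroup S)
    (hne : S ≠ Set.univ) (h1 : {a | IsSmallAtom S a}.ncard = 1) :
    (∀ s ∈ S, s ≤ F S → m S ∣ s) ∧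
      Stilde S = {x | m S ∣ x} ∪ {n | B S ≤ n} ∧
      IsNumericalSemigroup (Stilde S) := by
  obtain ⟨⟨h0, hfin⟩, hadd⟩ := hS
  -- F S ∉ S
  have hFne : Sᶜ.Nonempty := Set.nonempty_compl.mpr hne
  have hFS : F S ∉ S := Nat.sSup_mem hFne hfin.bddAbove
  -- m S ∈ S, 0 < m S
  have hinf : S.Infinite := by
    have := hfin.infinite_compl
    rwa [compl_compl] at this
  obtain ⟨x0, hx0S, hx0⟩ := hinf.exists_gt 0
  have hmMem : m S ∈ {s | s ∈ S ∧ 0 < s} := Nat.sInf_mem ⟨x0, hx0S, hx0⟩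
  have hmS : m S ∈ S := hmMem.1
  have hm0 : 0 < m S := hmMem.2
  have hmle : ∀ s ∈ S, 0 < s → m S ≤ s := fun s hs h0s => Nat.sInf_le ⟨hs, h0s⟩
  -- m is an atom
  have hmAtom : IsAtomOf S (m S) := by
    refine ⟨hmS, hm0, ?_⟩
    rintro ⟨x, hx, y, hy, hx0', hy0', hxy⟩
    have := hmle x hx hx0'
    have := hmle y hy hy0'
    omega
  -- m S < F S
  have hmF : m S < F S := by
    by_contra hcon
    have hempty : {a | IsSmallAtom S a} = ∅ := by
      ext a
      simp only [Set.mem_setOf_eq, Set.mem_empty_iff_false, iff_false]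
      rintro ⟨⟨haS, ha0, -⟩, haF⟩
      have := hmle a haS ha0
      omega
    rw [hempty] at h1
    simp at h1
  -- the unique small atom is m S
  have hmsmall : IsSmallAtom S (m S) := ⟨hmAtom, hmF⟩
  obtain ⟨a, ha⟩ := Set.ncard_eq_one.mp h1
  have haM : a = m S := by
    have : m S ∈ {a | IsSmallAtom S a} := hmsmall
    rw [ha] at this; exact this.symm
  subst haM
  have huniq : ∀ b, IsSmallAtom S b → b = m S := by
    intro b hb
    have : b ∈ {a | IsSmallAtom S a} := hb
    rw [ha] at this; exact this
  -- key divisibility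
  have key : ∀ s ∈ S, s ≤ F S → m S ∣ s := by
    intro s
    induction s using Nat.strong_induction_on with
    | _ s ih =>
      intro hs hsF
      rcases Nat.eq_zero_or_pos s with h0' | hpos
      · simp [h0']
      by_cases hsum : ∃ x ∈ S, ∃ y ∈ S, 0 < x ∧ 0 < y ∧ s = x + y
      · obtain ⟨x, hx, y, hy, hx0', hy0', rfl⟩ := hsum
        have h1' := ih x (by omega) hx (by omega)
        have h2' := ih y (by omega) hy (by omega)
        exact dvd_add h1' h2'
      · have hsF' : s < F S := lt_of_le_of_ne hsF (fun h => hFS (h ▸ hs))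
        have := huniq s ⟨⟨hs, hpos, hsum⟩, hsF'⟩
        exact this ▸ dvd_refl _
  -- multiples of m are in S
  have hmul : ∀ k, k * m S ∈ S := by
    intro k
    induction k with
    | zero => simpa using h0
    | succ n ihn => rw [Nat.succ_mul]; exact hadd _ ihn _ hmS
  -- B properties
  have hF0 : 0 < F S := by
    rcases Nat.eq_zero_or_pos (F S) with h | h
    · exact absurd (h ▸ hFS) (by simpa [h] using h0)
    · exact h
  have hBne : {s | s ∈ S ∧ s < F S}.Nonempty := ⟨0, h0, hF0⟩
  have hBbdd : BddAbove {s | s ∈ S ∧ s < F S} := ⟨F S, fun x hx => le_of_lt hx.2⟩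
  have hBmem : B S ∈ {s | s ∈ S ∧ s < F S} := Nat.sSup_mem hBne hBbdd
  have hBS : B S ∈ S := hBmem.1
  have hBF : B S < F S := hBmem.2
  have hBdvd : m S ∣ B S := key _ hBS (le_of_lt hBF)
  -- the set equality
  have hEq : Stilde S = {x | m S ∣ x} ∪ {n | B S ≤ n} := by
    ext x
    constructor
    · rintro (⟨s, hsS, hsB, rfl⟩ | hx)
      · left
        exact Nat.dvd_sub hBdvd (key s hsS (by omega))
      · right; exact hx
    · rintro (hx | hx)
      · rcases le_or_gt (B S) x with hB | hB
        · right; exact hB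
        · left
          refine ⟨B S - x, ?_, by omega, by omega⟩
          have hd : m S ∣ B S - x := Nat.dvd_sub hBdvd hx
          obtain ⟨k, hk⟩ := hd
          rw [hk, Nat.mul_comm]
          exact hmul k
      · right; exact hx
  refine ⟨key, hEq, ?_, ?_⟩
  · constructor
    · rw [hEq]; left; exact dvd_zero _
    · apply Set.Finite.subset (Set.finite_Iio (B S))
      intro n hn
      simp only [Set.mem_compl_iff, Stilde, Set.mem_union, Set.mem_setOf_eq] at hn
      push_neg at hn
      exact hn.2
  · intro a haS b hbS
    rw [hEq] at haS hbS ⊢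
    rcases haS with ha' | ha' <;> rcases hbS with hb' | hb'
    · left; exact dvd_add ha' hb'
    · right; simp only [Set.mem_setOf_eq] at hb' ⊢; omega
    · right; simp only [Set.mem_setOf_eq] at ha' ⊢; omega
    · right; simp only [Set.mem_setOf_eq] at ha' ⊢; omega
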